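/- Let A and B be Hilbert spaces continuously embedded in a common Hausdorff topological vector space, with A ∩ B dense in both A and B. Then for every continuous linear functional f on A ∩ B that extends continuously to A + B, one has ‖f‖_{(A∩B)^*} = ‖f‖_{A^* + B^*}, i.e., the dual of the intersection space is the sum of the dual spaces with equal norms. -/

import Mathlib

/-- Duality of intersection and sum: let `A`, `B` be Hilbert spaces continuously embedded in a
common Hausdorff topological vector space `E`.  The intersection space `A ∩ B` is modelled as the
submodule `S = {(a,b) : iA a = iB b}` of the `ℓ²`-product `WithLp 2 (A × B)`, whose norm is
exactly `‖u‖² = ‖a‖²_A + ‖b‖²_B`.  Assume `A ∩ B` is dense in both `A` and `B`, and let `f` be a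
continuous linear functional on `A ∩ B` that admits a decomposition `f = f₁ + f₂` with
`f₁ ∈ A*`, `f₂ ∈ B*` (i.e. `f` extends continuously to `A + B`).  Then the dual norm of `f`
satisfies `‖f‖²_{(A∩B)*} = inf { ‖f₁‖²_{A*} + ‖f₂‖²_{B*} : f = f₁ + f₂ }`. -/
theorem stmt7
    {E A B : Type*} [AddCommGroup E] [Module ℝ E] [TopologicalSpace E]
    [IsTopologicalAddGroup E] [ContinuousSMul ℝ E] [T2Space E]
    [NormedAddCommGroup A] [InnerProductSpace ℝ A] [CompleteSpace A]
    [NormedAddCommGroup B] [InnerProductSpace ℝ B] [CompleteSpace B]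
    (iA : A →L[ℝ] E) (iB : B →L[ℝ] E)
    (hiA : Function.Injective iA) (hiB : Function.Injective iB)
    (S : Submodule ℝ (WithLp 2 (A × B)))
    (hS : ∀ x : WithLp 2 (A × B), x ∈ S ↔ iA x.fst = iB x.snd)
    (hdenseA : DenseRange (fun u : S => ((u : WithLp 2 (A × B)).fst : A)))
    (hdenseB : DenseRange (fun u : S => ((u : WithLp 2 (A × B)).snd : B)))
    (f : S →L[ℝ] ℝ)
    (hext : ∃ (f₁ : A →L[ℝ] ℝ) (f₂ : B →L[ℝ] ℝ),
      ∀ u : S, f u = f₁ (u : WithLp 2 (A × B)).fst + f₂ (u : WithLp 2 (A × B)).snd) :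
    ‖f‖ ^ 2 = sInf {r : ℝ | ∃ (f₁ : A →L[ℝ] ℝ) (f₂ : B →L[ℝ] ℝ),
      (∀ u : S, f u = f₁ (u : WithLp 2 (A × B)).fst + f₂ (u : WithLp 2 (A × B)).snd) ∧
      r = ‖f₁‖ ^ 2 + ‖f₂‖ ^ 2} := by
  classical
  -- S is closed, hence a Hilbert space
  have hclosed : IsClosed (S : Set (WithLp 2 (A × B))) := by
    have : (S : Set (WithLp 2 (A × B)))
        = {x : WithLp 2 (A × B) | iA x.fst = iB x.snd} := by
      ext x; exact hS x
    rw [this]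
    have hcont1 : Continuous fun x : WithLp 2 (A × B) => iA x.fst := by
      exact iA.continuous.comp ((continuous_fst).comp
        (WithLp.prodContinuousLinearEquiv 2 ℝ A B).continuous)
    have hcont2 : Continuous fun x : WithLp 2 (A × B) => iB x.snd := by
      exact iB.continuous.comp ((continuous_snd).comp
        (WithLp.prodContinuousLinearEquiv 2 ℝ A B).continuous)
    exact isClosed_eq hcont1 hcont2
  haveI : CompleteSpace S := hclosed.completeSpace_coe
  -- Riesz representation
  set w : S := (InnerProductSpace.toDual ℝ S).symm f with hw
  have hwnorm : ‖w‖ = ‖f‖ := by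
    rw [hw]; exact (InnerProductSpace.toDual ℝ S).symm.norm_map f
  have hfw : ∀ u : S, f u = inner ℝ w u := by
    intro u
    exact (InnerProductSpace.toDual_symm_apply (𝕜 := ℝ)).symm
  set w1 : A := (w : WithLp 2 (A × B)).fst with hw1
  set w2 : B := (w : WithLp 2 (A × B)).snd with hw2
  have hdecomp : ∀ u : S, f u = (innerSL ℝ w1) (u : WithLp 2 (A × B)).fst +
      (innerSL ℝ w2) (u : WithLp 2 (A × B)).snd := by
    intro u
    rw [hfw u, Submodule.coe_inner, WithLp.prod_inner_apply]
    rfl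
  have hmem : (‖innerSL ℝ w1‖ ^ 2 + ‖innerSL ℝ w2‖ ^ 2) ∈
      {r : ℝ | ∃ (f₁ : A →L[ℝ] ℝ) (f₂ : B →L[ℝ] ℝ),
      (∀ u : S, f u = f₁ (u : WithLp 2 (A × B)).fst + f₂ (u : WithLp 2 (A × B)).snd) ∧
      r = ‖f₁‖ ^ 2 + ‖f₂‖ ^ 2} := ⟨_, _, hdecomp, rfl⟩
  apply le_antisymm
  · -- lower bound: ‖f‖² ≤ every element of the set
    apply le_csInf ⟨_, hmem⟩
    rintro r ⟨f₁, f₂, hfd, rfl⟩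
    have hr0 : (0:ℝ) ≤ ‖f₁‖ ^ 2 + ‖f₂‖ ^ 2 := by positivity
    have hle : ‖f‖ ≤ Real.sqrt (‖f₁‖ ^ 2 + ‖f₂‖ ^ 2) := by
      apply ContinuousLinearMap.opNorm_le_bound _ (Real.sqrt_nonneg _)
      intro u
      rw [hfd u]
      set a := (u : WithLp 2 (A × B)).fst
      set b := (u : WithLp 2 (A × B)).snd
      have h1 : ‖f₁ a + f₂ b‖ ≤ ‖f₁‖ * ‖a‖ + ‖f₂‖ * ‖b‖ :=
        le_trans (norm_add_le _ _)
          (add_le_add (f₁.le_opNorm a) (f₂.le_opNorm b))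
      have hu : ‖(u : WithLp 2 (A × B))‖ ^ 2 = ‖a‖ ^ 2 + ‖b‖ ^ 2 :=
        WithLp.prod_norm_sq_eq_of_L2 _
      have hun : ‖u‖ = ‖(u : WithLp 2 (A × B))‖ := rfl
      have h2 : ‖f₁‖ * ‖a‖ + ‖f₂‖ * ‖b‖ ≤
          Real.sqrt (‖f₁‖ ^ 2 + ‖f₂‖ ^ 2) * ‖(u : WithLp 2 (A × B))‖ := by
        have hCS : (‖f₁‖ * ‖a‖ + ‖f₂‖ * ‖b‖) ^ 2 ≤
            (‖f₁‖ ^ 2 + ‖f₂‖ ^ 2) * (‖a‖ ^ 2 + ‖b‖ ^ 2) := by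
          nlinarith [sq_nonneg (‖f₁‖ * ‖b‖ - ‖f₂‖ * ‖a‖)]
        have hrhs : Real.sqrt (‖f₁‖ ^ 2 + ‖f₂‖ ^ 2) * ‖(u : WithLp 2 (A × B))‖ =
            Real.sqrt ((‖f₁‖ ^ 2 + ‖f₂‖ ^ 2) * (‖a‖ ^ 2 + ‖b‖ ^ 2)) := by
          rw [Real.sqrt_mul hr0, ← hu, Real.sqrt_sq (norm_nonneg _)]
        rw [hrhs]
        calc ‖f₁‖ * ‖a‖ + ‖f₂‖ * ‖b‖
            = Real.sqrt ((‖f₁‖ * ‖a‖ + ‖f₂‖ * ‖b‖) ^ 2) := by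
              rw [Real.sqrt_sq (by positivity)]
          _ ≤ Real.sqrt ((‖f₁‖ ^ 2 + ‖f₂‖ ^ 2) * (‖a‖ ^ 2 + ‖b‖ ^ 2)) :=
              Real.sqrt_le_sqrt hCS
      calc ‖f₁ a + f₂ b‖ ≤ ‖f₁‖ * ‖a‖ + ‖f₂‖ * ‖b‖ := h1
        _ ≤ Real.sqrt (‖f₁‖ ^ 2 + ‖f₂‖ ^ 2) * ‖u‖ := by rw [hun]; exact h2
    calc ‖f‖ ^ 2 ≤ Real.sqrt (‖f₁‖ ^ 2 + ‖f₂‖ ^ 2) ^ 2 := by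
          exact pow_le_pow_left₀ (norm_nonneg f) hle 2
      _ = ‖f₁‖ ^ 2 + ‖f₂‖ ^ 2 := Real.sq_sqrt hr0
  · -- upper bound via Riesz decomposition
    have hbdd : BddBelow {r : ℝ | ∃ (f₁ : A →L[ℝ] ℝ) (f₂ : B →L[ℝ] ℝ),
        (∀ u : S, f u = f₁ (u : WithLp 2 (A × B)).fst + f₂ (u : WithLp 2 (A × B)).snd) ∧
        r = ‖f₁‖ ^ 2 + ‖f₂‖ ^ 2} := by
      refine ⟨0, ?_⟩
      rintro r ⟨f₁, f₂, _, rfl⟩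
      positivity
    refine le_trans (csInf_le hbdd hmem) ?_
    rw [innerSL_apply_norm, innerSL_apply_norm]
    have : ‖w1‖ ^ 2 + ‖w2‖ ^ 2 = ‖(w : WithLp 2 (A × B))‖ ^ 2 :=
      (WithLp.prod_norm_sq_eq_of_L2 _).symm
    rw [this]
    have : ‖(w : WithLp 2 (A × B))‖ = ‖f‖ := by rw [← hwnorm]; rfl
    rw [this]
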